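/- arXiv:1201.2292 — 4 statements merged into one kernel-verified Lean document; each statement's English description precedes it below -/
import Mathlib

section
/- Let g:(0,∞)→(0,∞) be strictly decreasing, and suppose that for every a>0 there exists b_a>0 such that g(a x) = b_a · g(x) for all x>0. Then there exist w>0 and α>0 such that g(x) = w·x^{-α} for all x>0. -/
/-- a strictly decreasing positive function on `(0,∞)` satisfying the
multiplicative scaling equation `g(ax) = bₐ·g(x)` must be a power function `g(x) = w·x^{-α}`
with `w > 0` and `α > 0`. -/
theorem stmt5 (g : ℝ → ℝ)
    (hdec : StrictAntiOn g (Set.Ioi 0))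
    (hpos : ∀ x : ℝ, 0 < x → 0 < g x)
    (hscale : ∀ a : ℝ, 0 < a → ∃ b : ℝ, 0 < b ∧ ∀ x : ℝ, 0 < x → g (a * x) = b * g x) :
    ∃ w α : ℝ, 0 < w ∧ 0 < α ∧ ∀ x : ℝ, 0 < x → g x = w * x ^ (-α) := by
  have hg1 : 0 < g 1 := hpos 1 one_pos
  -- multiplicative Cauchy equation for g
  have hmul : ∀ a x : ℝ, 0 < a → 0 < x → g (a * x) = g a / g 1 * g x := by
    intro a x ha hx
    obtain ⟨b, hb, hbx⟩ := hscale a ha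
    have h1 := hbx 1 one_pos
    rw [mul_one] at h1
    rw [hbx x hx, h1, mul_div_assoc, div_self hg1.ne', mul_one]
  set φ : ℝ → ℝ := fun t => Real.log (g (Real.exp t)) - Real.log (g 1) with hφ
  have hadd : ∀ s t : ℝ, φ (s + t) = φ s + φ t := by
    intro s t
    have hs := Real.exp_pos s
    have ht := Real.exp_pos t
    simp only [hφ, Real.exp_add]
    rw [hmul _ _ hs ht, Real.log_mul (div_pos (hpos _ hs) hg1).ne' (hpos _ ht).ne',
      Real.log_div (hpos _ hs).ne' hg1.ne']
    ring
  let F : ℝ →+ ℝ := AddMonoidHom.mk' φ (fun s t => hadd s t)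
  have hrat : ∀ q : ℚ, ∀ x : ℝ, φ ((q : ℝ) * x) = (q : ℝ) * φ x := by
    intro q x
    have := map_ratCast_smul F ℝ ℝ q x
    exact this
  have hanti : StrictAnti φ := by
    intro s t hst
    have := hdec (Set.mem_Ioi.2 (Real.exp_pos s)) (Set.mem_Ioi.2 (Real.exp_pos t))
      (Real.exp_lt_exp.2 hst)
    exact sub_lt_sub_right (Real.log_lt_log (hpos _ (Real.exp_pos t)) this) _
  have hφ0 : φ 0 = 0 := by simp [hφ]
  clear_value φ
  obtain ⟨c, hc⟩ : ∃ c : ℝ, c = φ 1 := ⟨φ 1, rfl⟩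
  have hcneg : c < 0 := by rw [hc, ← hφ0]; exact hanti one_pos
  have hratval : ∀ q : ℚ, φ (q : ℝ) = c * (q : ℝ) := by
    intro q
    have := hrat q 1
    rw [mul_one] at this
    rw [this, ← hc, mul_comm]
  have hlin : ∀ t : ℝ, φ t = c * t := by
    intro t
    have hle : φ t ≤ c * t := by
      refine le_of_forall_pos_le_add fun ε hε => ?_
      obtain ⟨q, hq1, hq2⟩ := exists_rat_btwn (show t - ε / (-c) < t by
        have : 0 < ε / (-c) := div_pos hε (neg_pos.2 hcneg)
        linarith)
      have h1 : φ t ≤ φ q := (hanti hq2).le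
      have h2 : c * (q : ℝ) ≤ c * t + ε := by
        have hc' : 0 < -c := neg_pos.2 hcneg
        have h3 : (-c) * (t - ε / (-c)) < (-c) * (q : ℝ) :=
          mul_lt_mul_of_pos_left hq1 hc'
        have h4 : (-c) * (t - ε / (-c)) = (-c) * t - ε := by
          field_simp
          have h5 : c * (ε / c) = ε := by rw [mul_comm]; exact div_mul_cancel₀ ε hcneg.ne
          rw [mul_sub, mul_neg, h5]
          ring
        nlinarith
      calc φ t ≤ φ q := h1
        _ = c * q := hratval q
        _ ≤ c * t + ε := h2
    have hge : c * t ≤ φ t := by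
      refine le_of_forall_pos_le_add fun ε hε => ?_
      obtain ⟨q, hq1, hq2⟩ := exists_rat_btwn (show t < t + ε / (-c) by
        have : 0 < ε / (-c) := div_pos hε (neg_pos.2 hcneg)
        linarith)
      have h1 : φ q ≤ φ t := (hanti hq1).le
      have h2 : c * t ≤ c * (q : ℝ) + ε := by
        have hc' : 0 < -c := neg_pos.2 hcneg
        have h3 : (-c) * (q : ℝ) < (-c) * (t + ε / (-c)) :=
          mul_lt_mul_of_pos_left hq2 hc'
        have h4 : (-c) * (t + ε / (-c)) = (-c) * t + ε := by
          field_simp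
          have h5 : c * (ε / c) = ε := by rw [mul_comm]; exact div_mul_cancel₀ ε hcneg.ne
          rw [mul_add, mul_neg, h5]
          ring
        nlinarith
      calc c * t ≤ c * q + ε := h2
        _ = φ q + ε := by rw [hratval q]
        _ ≤ φ t + ε := by linarith
    linarith
  refine ⟨g 1, -c, hg1, neg_pos.2 hcneg, fun x hx => ?_⟩
  have := hlin (Real.log x)
  simp only [hφ, Real.exp_log hx] at this
  have hgx : Real.log (g x) = Real.log (g 1) + c * Real.log x := by linarith
  have : g x = Real.exp (Real.log (g 1) + c * Real.log x) := by
    rw [← hgx, Real.exp_log (hpos x hx)]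
  rw [this, Real.exp_add, Real.exp_log hg1, neg_neg,
    Real.rpow_def_of_pos hx, mul_comm c]
end

section
/- Let U:(0,∞)→ℝ be strictly increasing, differentiable and strictly concave, and suppose that for every a>0 there exist b_a>0 and d_a∈ℝ such that U(a x) = b_a·U(x) + d_a for all x>0. Then there exist α>0, w>0 and c∈ℝ such that either α≠1 and U(x) = w·x^{1-α}/(1-α) + c for all x>0, or α=1 and U(x) = w·log x + c for all x>0. -/
private lemma aux_const_of_derivAt_zero {F : ℝ → ℝ}
    (h : ∀ z ∈ Set.Ioi (0:ℝ), HasDerivAt F 0 z) {x y : ℝ}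
    (hx : x ∈ Set.Ioi (0:ℝ)) (hy : y ∈ Set.Ioi (0:ℝ)) : F x = F y := by
  have hopen : IsOpen (Set.Ioi (0:ℝ)) := isOpen_Ioi
  have hdo : DifferentiableOn ℝ F (Set.Ioi 0) :=
    fun z hz => ((h z hz).differentiableAt).differentiableWithinAt
  have hfd : ∀ z ∈ Set.Ioi (0:ℝ), fderivWithin ℝ F (Set.Ioi 0) z = 0 := by
    intro z hz
    have hF : HasFDerivAt F ((1 : ℝ →L[ℝ] ℝ).smulRight (0:ℝ)) z := (h z hz).hasFDerivAt
    have hzero : ((1 : ℝ →L[ℝ] ℝ).smulRight (0:ℝ)) = 0 := by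
      ext; simp
    rw [hzero] at hF
    exact hF.hasFDerivWithinAt.fderivWithin (hopen.uniqueDiffWithinAt hz)
  exact (convex_Ioi 0).is_const_of_fderivWithin_eq_zero hdo hfd hx hy

/-- Arrow–Pratt characterization: a strictly increasing, differentiable,
strictly concave `U` on `(0,∞)` satisfying the affine scaling equation
`U(ax) = bₐ·U(x) + dₐ` (with `bₐ > 0`) for every `a > 0` must be iso-elastic:
`U(x) = w·x^{1-α}/(1-α) + c` for some `α > 0`, `α ≠ 1`, or `U(x) = w·log x + c` (`α = 1`). -/
theorem stmt6 (U : ℝ → ℝ)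
    (hmono : StrictMonoOn U (Set.Ioi 0))
    (hdiff : DifferentiableOn ℝ U (Set.Ioi 0))
    (hconc : StrictConcaveOn ℝ (Set.Ioi 0) U)
    (hscale : ∀ a : ℝ, 0 < a →
      ∃ b : ℝ, 0 < b ∧ ∃ d : ℝ, ∀ x : ℝ, 0 < x → U (a * x) = b * U x + d) :
    ∃ α w c : ℝ, 0 < α ∧ 0 < w ∧
      ((α ≠ 1 ∧ ∀ x : ℝ, 0 < x → U x = w * x ^ (1 - α) / (1 - α) + c) ∨
       (α = 1 ∧ ∀ x : ℝ, 0 < x → U x = w * Real.log x + c)) := by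
  have hopen : IsOpen (Set.Ioi (0:ℝ)) := isOpen_Ioi
  set f := deriv U with hfdef
  have hdAt : ∀ x : ℝ, 0 < x → DifferentiableAt ℝ U x := fun x hx =>
    (hdiff x hx).differentiableAt (hopen.mem_nhds hx)
  -- derivative functional equation
  have key : ∀ a : ℝ, 0 < a → ∃ b : ℝ, 0 < b ∧ ∀ x : ℝ, 0 < x →
      f (a * x) * a = b * f x := by
    intro a ha
    obtain ⟨b, hb, d, hU⟩ := hscale a ha
    refine ⟨b, hb, fun x hx => ?_⟩
    have hax : 0 < a * x := mul_pos ha hx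
    have h1 : HasDerivAt (fun y => U (a * y)) (f (a * x) * a) x := by
      have hg : HasDerivAt (fun y : ℝ => a * y) a x := by
        simpa using (hasDerivAt_id x).const_mul a
      exact (hdAt (a * x) hax).hasDerivAt.comp x hg
    have h2 : HasDerivAt (fun y => b * U y + d) (b * f x) x :=
      ((hdAt x hx).hasDerivAt.const_mul b).add_const d
    have heq : (fun y => U (a * y)) =ᶠ[nhds x] (fun y => b * U y + d) := by
      filter_upwards [hopen.mem_nhds hx] with y hy using hU y hy
    have h1' : HasDerivAt (fun y => U (a * y)) (b * f x) x :=
      h2.congr_of_eventuallyEq heq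
    exact h1.unique h1'
  -- f is strictly antitone and positive
  have hanti : StrictAntiOn f (Set.Ioi 0) :=
    hconc.strictAntiOn_deriv (fun x hx => hdAt x hx)
  have hfpos : ∀ x : ℝ, 0 < x → 0 < f x := by
    intro x hx
    have hx1 : (0:ℝ) < x + 1 := by linarith
    have hs : slope U x (x + 1) < f x :=
      hconc.slope_lt_deriv hx hx1 (by linarith) (hdAt x hx)
    have hsl : 0 < slope U x (x + 1) := by
      rw [slope_def_field]
      have := hmono hx hx1 (by linarith)
      have h01 : (0:ℝ) < (x+1) - x := by linarith
      exact div_pos (by linarith) h01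
    linarith
  have hf1 : 0 < f 1 := hfpos 1 one_pos
  -- multiplicative structure
  have hmul : ∀ a x : ℝ, 0 < a → 0 < x → f (a * x) = f a * f x / f 1 := by
    intro a x ha hx
    obtain ⟨b, hb, hkey⟩ := key a ha
    have e1 := hkey 1 one_pos
    have e2 := hkey x hx
    rw [mul_one] at e1
    -- e1 : f a * a = b * f 1, e2 : f (a*x) * a = b * f x
    have hb' : b = f a * a / f 1 := by field_simp [hf1.ne'] at e1 ⊢; linarith
    rw [hb'] at e2
    field_simp at e2 ⊢
    nlinarith [e2, ha]
  set h : ℝ → ℝ := fun x => f x / f 1 with hhdef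
  have hhpos : ∀ x : ℝ, 0 < x → 0 < h x := fun x hx => div_pos (hfpos x hx) hf1
  have hhmul : ∀ a x : ℝ, 0 < a → 0 < x → h (a * x) = h a * h x := by
    intro a x ha hx
    simp only [hhdef]
    rw [hmul a x ha hx]
    field_simp
  have hh1 : h 1 = 1 := by simp [hhdef, hf1.ne']
  -- G is additive and strictly antitone
  set G : ℝ → ℝ := fun t => Real.log (h (Real.exp t)) with hGdef
  have hGadd : ∀ t u : ℝ, G (t + u) = G t + G u := by
    intro t u
    simp only [hGdef]
    rw [Real.exp_add, hhmul _ _ (Real.exp_pos t) (Real.exp_pos u),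
      Real.log_mul (hhpos _ (Real.exp_pos t)).ne' (hhpos _ (Real.exp_pos u)).ne']
  have hGanti : StrictAnti G := by
    intro t u htu
    have he : Real.exp t < Real.exp u := Real.exp_lt_exp.mpr htu
    have hfu : f (Real.exp u) < f (Real.exp t) :=
      hanti (Real.exp_pos t) (Real.exp_pos u) he
    have hlt : h (Real.exp u) < h (Real.exp t) := by
      simp only [hhdef]
      gcongr
    exact Real.log_lt_log (hhpos _ (Real.exp_pos u)) hlt
  have hG0 : G 0 = 0 := by simp [hGdef, hh1]
  set s := G 1 with hsdef
  have hs_neg : s < 0 := by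
    have := hGanti one_pos
    rwa [hG0] at this
  -- G is additive, hence rationally linear; with monotonicity, linear
  let G' : ℝ →+ ℝ := AddMonoidHom.mk' G (fun t u => hGadd t u)
  have hq : ∀ q : ℚ, G (q : ℝ) = (q : ℝ) * s := by
    intro q
    have := map_ratCast_smul G' ℝ ℝ q (1 : ℝ)
    simpa [G', smul_eq_mul] using this
  have hlin : ∀ t : ℝ, G t = s * t := by
    intro t
    by_contra hne
    set ε := |G t - s * t| with hεdef
    have hεpos : 0 < ε := abs_pos.mpr (sub_ne_zero.mpr hne)
    set δ := ε / (-s) with hδdef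
    have hδpos : 0 < δ := div_pos hεpos (neg_pos.mpr hs_neg)
    have hδs : δ * s = -ε := by
      rw [hδdef, div_mul_eq_mul_div, div_neg, mul_div_assoc, div_self hs_neg.ne, mul_one]
    obtain ⟨q1, hq1a, hq1b⟩ := exists_rat_btwn (show t - δ < t by linarith)
    obtain ⟨q2, hq2a, hq2b⟩ := exists_rat_btwn (show t < t + δ by linarith)
    have h1 : G t < (q1 : ℝ) * s := by rw [← hq q1]; exact hGanti hq1b
    have h2 : (q2 : ℝ) * s < G t := by rw [← hq q2]; exact hGanti hq2a
    have b1 : (q1 : ℝ) * s < s * t + ε := by nlinarith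
    have b2 : s * t - ε < (q2 : ℝ) * s := by nlinarith
    have : |G t - s * t| < ε := abs_lt.mpr ⟨by linarith, by linarith⟩
    exact absurd this (by rw [hεdef]; exact lt_irrefl _)
  -- f x = f 1 * x ^ s on (0, ∞)
  have hfx : ∀ x : ℝ, 0 < x → f x = f 1 * x ^ s := by
    intro x hx
    have hGx : G (Real.log x) = s * Real.log x := hlin _
    have : Real.log (h x) = s * Real.log x := by
      rw [← hGx]; simp [hGdef, Real.exp_log hx]
    have hxs : h x = x ^ s := by
      rw [Real.rpow_def_of_pos hx, mul_comm, ← this, Real.exp_log (hhpos x hx)]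
    have := hxs
    simp only [hhdef] at this
    field_simp at this
    linarith [this]
  set w := f 1 with hwdef
  by_cases hs1 : s = -1
  · -- logarithmic case, α = 1
    refine ⟨1, w, U 1 - w * Real.log (Real.exp 0), one_pos, hf1, Or.inr ⟨rfl, ?_⟩⟩
    have hconst : ∀ x : ℝ, 0 < x →
        U x - w * Real.log x = U 1 - w * Real.log 1 := by
      intro x hx
      have hderiv : ∀ z ∈ Set.Ioi (0:ℝ), HasDerivAt (fun y => U y - w * Real.log y) 0 z := by
        intro z hz
        have hz' : (0:ℝ) < z := hz
        have h1 : HasDerivAt U (f z) z := (hdAt z hz').hasDerivAt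
        have h2 : HasDerivAt (fun y => w * Real.log y) (w * z⁻¹) z :=
          (Real.hasDerivAt_log hz'.ne').const_mul w
        have hfz : f z = w * z⁻¹ := by
          rw [hfx z hz', hs1, Real.rpow_neg_one]
        have := h1.sub h2
        rwa [hfz, sub_self] at this
      exact aux_const_of_derivAt_zero hderiv hx (Set.mem_Ioi.mpr one_pos)
    intro x hx
    have := hconst x hx
    simp only [Real.log_one, mul_zero, sub_zero] at this
    simp only [Real.exp_zero, Real.log_one, mul_zero, sub_zero]
    linarith
  · -- power case, α = -s ≠ 1
    set α := -s with hαdef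
    have hα : 0 < α := by simp [hαdef]; linarith
    have hα1 : α ≠ 1 := by
      intro hcon
      apply hs1
      rw [hαdef] at hcon
      linarith
    have hp : (1:ℝ) - α ≠ 0 := by
      intro hcon
      apply hα1
      linarith
    refine ⟨α, w, U 1 - w * (1:ℝ) ^ (1 - α) / (1 - α), hα, hf1, Or.inl ⟨hα1, ?_⟩⟩
    have hconst : ∀ x : ℝ, 0 < x →
        U x - w / (1 - α) * x ^ (1 - α) = U 1 - w / (1 - α) * (1:ℝ) ^ (1 - α) := by
      intro x hx
      have hderiv : ∀ z ∈ Set.Ioi (0:ℝ),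
          HasDerivAt (fun y : ℝ => U y - w / (1 - α) * y ^ (1 - α)) 0 z := by
        intro z hz
        have hz' : (0:ℝ) < z := hz
        have h1 : HasDerivAt U (f z) z := (hdAt z hz').hasDerivAt
        have hpw : HasDerivAt (fun y : ℝ => y ^ (1 - α))
            ((1 - α) * z ^ (1 - α - 1)) z :=
          Real.hasDerivAt_rpow_const (Or.inl hz'.ne')
        have he : (1:ℝ) - α - 1 = s := by rw [hαdef]; ring
        rw [he] at hpw
        have h2 : HasDerivAt (fun y : ℝ => w / (1 - α) * y ^ (1 - α))
            (w / (1 - α) * ((1 - α) * z ^ s)) z := hpw.const_mul _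
        have hsimp : w / (1 - α) * ((1 - α) * z ^ s) = w * z ^ s := by
          field_simp
        rw [hsimp] at h2
        have hfz : f z = w * z ^ s := hfx z hz'
        have := h1.sub h2
        rwa [hfz, sub_self] at this
      exact aux_const_of_derivAt_zero hderiv hx (Set.mem_Ioi.mpr one_pos)
    intro x hx
    have := hconst x hx
    have hrw : ∀ y : ℝ, w / (1 - α) * y ^ (1 - α) = w * y ^ (1 - α) / (1 - α) := by
      intro y; ring
    rw [hrw, hrw] at this
    linarith
end

section
/- For i=1,2, let α_i>0, w_i>0, c_i∈ℝ, and let U_i:(0,∞)→ℝ be given by U_i(x) = w_i x^{1-α_i}/(1-α_i) + c_i if α_i≠1 and U_i(x) = w_i log x + c_i if α_i=1. Suppose there exist functions b:(0,∞)→(0,∞) and d:(0,∞)→ℝ such that U_i(a x) = b(a)·U_i(x) + d(a) for i=1,2, all a>0 and all x>0. Then α_1 = α_2. -/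
lemma stmt7_aux (α w c : ℝ) (hα : 0 < α) (hw : 0 < w) (U : ℝ → ℝ)
    (hU : ∀ x : ℝ, 0 < x →
      U x = if α = 1 then w * Real.log x + c else w * x ^ (1 - α) / (1 - α) + c)
    (b d : ℝ → ℝ)
    (hs : ∀ a : ℝ, 0 < a → ∀ x : ℝ, 0 < x → U (a * x) = b a * U x + d a) :
    ∀ a : ℝ, 0 < a → b a = a ^ (1 - α) := by
  intro a ha
  have h2 : (0:ℝ) < 2 := by norm_num
  have e2 := hs a ha 2 h2
  have e1 := hs a ha 1 one_pos
  have hd : U (a * 2) - U (a * 1) = b a * (U 2 - U 1) := by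
    rw [e2, e1]; ring
  by_cases h1 : α = 1
  · subst h1
    simp only [if_pos rfl] at hU
    rw [hU _ (by positivity), hU _ (by positivity), hU 2 h2, hU 1 one_pos] at hd
    rw [Real.log_mul (ne_of_gt ha) (by norm_num), mul_one, Real.log_one] at hd
    simp only [if_true] at hd
    have hlog2 : Real.log 2 ≠ 0 := by
      simpa using Real.log_ne_zero_of_pos_of_ne_one h2 (by norm_num)
    have key : 1 * (w * Real.log 2) = b a * (w * Real.log 2) := by linarith [hd]
    have hb1 : b a = 1 :=
      (mul_right_cancel₀ (mul_ne_zero (ne_of_gt hw) hlog2) key).symm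
    simp [hb1]
  · simp only [if_neg h1] at hU
    rw [hU _ (by positivity), hU _ (by positivity), hU 2 h2, hU 1 one_pos] at hd
    rw [mul_one, Real.one_rpow] at hd
    rw [Real.mul_rpow (le_of_lt ha) (by norm_num)] at hd
    have hne : 1 - α ≠ 0 := by
      intro h; apply h1; linarith
    have h2ne : (2:ℝ) ^ (1 - α) ≠ 1 := by
      intro h
      have := Real.log_rpow h2 (1 - α)
      rw [h, Real.log_one] at this
      have hlog2 : Real.log 2 ≠ 0 := by
        simpa using Real.log_ne_zero_of_pos_of_ne_one h2 (by norm_num)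
      exact hne (by
        rcases mul_eq_zero.mp this.symm with h' | h'
        · exact h'
        · exact absurd h' hlog2)
    have key : a ^ (1 - α) * ((2:ℝ) ^ (1 - α) - 1) = b a * ((2:ℝ) ^ (1 - α) - 1) := by
      have hw' : w ≠ 0 := ne_of_gt hw
      field_simp at hd
      nlinarith [hd]
    have hsub : (2:ℝ) ^ (1 - α) - 1 ≠ 0 := sub_ne_zero.mpr h2ne
    exact (mul_right_cancel₀ hsub key).symm

/-- two iso-elastic (weighted α-fair) utilities on `(0,∞)` satisfying a common
affine scaling law `Uᵢ(ax) = b(a)·Uᵢ(x) + d(a)` must have the same fairness parameter `α`. -/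
theorem stmt7 (α₁ α₂ w₁ w₂ c₁ c₂ : ℝ)
    (hα₁ : 0 < α₁) (hα₂ : 0 < α₂) (hw₁ : 0 < w₁) (hw₂ : 0 < w₂)
    (U₁ U₂ : ℝ → ℝ)
    (hU₁ : ∀ x : ℝ, 0 < x →
      U₁ x = if α₁ = 1 then w₁ * Real.log x + c₁ else w₁ * x ^ (1 - α₁) / (1 - α₁) + c₁)
    (hU₂ : ∀ x : ℝ, 0 < x →
      U₂ x = if α₂ = 1 then w₂ * Real.log x + c₂ else w₂ * x ^ (1 - α₂) / (1 - α₂) + c₂)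
    (b d : ℝ → ℝ) (hb : ∀ a : ℝ, 0 < a → 0 < b a)
    (hscale : ∀ a : ℝ, 0 < a → ∀ x : ℝ, 0 < x →
      U₁ (a * x) = b a * U₁ x + d a ∧ U₂ (a * x) = b a * U₂ x + d a) :
    α₁ = α₂ := by
  have h1 := stmt7_aux α₁ w₁ c₁ hα₁ hw₁ U₁ hU₁ b d
    (fun a ha x hx => (hscale a ha x hx).1) 2 (by norm_num)
  have h2 := stmt7_aux α₂ w₂ c₂ hα₂ hw₂ U₂ hU₂ b d
    (fun a ha x hx => (hscale a ha x hx).2) 2 (by norm_num)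
  have heq : (2:ℝ) ^ (1 - α₁) = (2:ℝ) ^ (1 - α₂) := by rw [← h1, ← h2]
  have hl := congrArg Real.log heq
  rw [Real.log_rpow (by norm_num), Real.log_rpow (by norm_num)] at hl
  have hlog2 : Real.log 2 ≠ 0 := by
    simpa using Real.log_ne_zero_of_pos_of_ne_one (by norm_num) (by norm_num : (2:ℝ) ≠ 1)
  have := mul_right_cancel₀ hlog2 hl
  linarith
end

section
/- Let U be a network utility function and, for a subset C ⊆ (0,∞)^R with a unique maximizer, write Λ(y;C) for the maximizer of Λ ↦ U(y,Λ) over C. Then the following are equivalent: (i) for every such C, every y∈(0,∞)^R and every a>0, Λ(ay;C) = Λ(y;C); (ii) for every such C, every y∈(0,∞)^R and every a>0, Λ(y;aC) = a·Λ(y;C), where aC = {a·Λ : Λ∈C}. -/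
/-- The network utility function built from per-route utilities `u r`. -/
noncomputable def netUtil {R : Type*} [Fintype R] (u : R → ℝ → ℝ)
    (y Λ : R → ℝ) : ℝ :=
  (∑ i, y i)⁻¹ * ∑ r, y r * u r (Λ r / y r)

/-- `L` is the unique maximizer of `Λ ↦ U y Λ` over the capacity set `C`. -/
def IsUniqueMax {R : Type*} (U : (R → ℝ) → (R → ℝ) → ℝ)
    (y : R → ℝ) (C : Set (R → ℝ)) (L : R → ℝ) : Prop :=
  L ∈ C ∧ ∀ Λ ∈ C, Λ ≠ L → U y Λ < U y L

lemma netUtil_scale {R : Type*} [Fintype R] (u : R → ℝ → ℝ) {a : ℝ} (ha : a ≠ 0)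
    (y Λ : R → ℝ) :
    netUtil u (fun r => a * y r) (fun r => a * Λ r) = netUtil u y Λ := by
  unfold netUtil
  simp only [mul_div_mul_left _ _ ha]
  simp only [mul_assoc]
  rw [← Finset.mul_sum, ← Finset.mul_sum, mul_inv, mul_assoc,
    mul_comm a⁻¹, mul_assoc, mul_comm a, mul_inv_cancel_right₀ ha]

lemma isUniqueMax_scale {R : Type*} [Fintype R] (u : R → ℝ → ℝ) {a : ℝ} (ha : a ≠ 0)
    {y : R → ℝ} {C : Set (R → ℝ)} {L : R → ℝ}
    (hL : IsUniqueMax (netUtil u) y C L) :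
    IsUniqueMax (netUtil u) (fun r => a * y r)
      ((fun Λ : R → ℝ => fun r => a * Λ r) '' C) (fun r => a * L r) := by
  constructor
  · exact ⟨L, hL.1, rfl⟩
  · rintro Λ ⟨M, hM, rfl⟩ hne
    rw [netUtil_scale u ha, netUtil_scale u ha]
    refine hL.2 M hM ?_
    rintro rfl; exact hne rfl

lemma inv_scale_img {R : Type*} {a : ℝ} (ha : a ≠ 0) (C : Set (R → ℝ)) :
    (fun Λ : R → ℝ => fun r => a⁻¹ * Λ r) '' ((fun Λ : R → ℝ => fun r => a * Λ r) '' C)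
      = C := by
  rw [Set.image_image]
  have : (fun (x : R → ℝ) => fun r => a⁻¹ * (a * x r)) = id := by
    funext x r; simp [inv_mul_cancel_left₀ ha]
  rw [this, Set.image_id]

lemma isUniqueMax_unique {R : Type*} {U : (R → ℝ) → (R → ℝ) → ℝ}
    {y : R → ℝ} {C : Set (R → ℝ)} {L L' : R → ℝ}
    (h : IsUniqueMax U y C L) (h' : IsUniqueMax U y C L') : L = L' := by
  by_contra hne
  exact absurd (h.2 L' h'.1 (Ne.symm hne)) (not_lt.2 (h'.2 L h.1 hne).le)

/-- for a network utility function, flow scalability (`Λ(ay;C) = Λ(y;C)`) is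
equivalent to proportional scaling with capacity (`Λ(y;aC) = a·Λ(y;C)`), over all capacity
sets `C ⊆ (0,∞)^R` admitting a unique maximizer. -/
theorem stmt17 {R : Type*} [Fintype R] [Nonempty R]
    (u : R → ℝ → ℝ)
    (hmono : ∀ r, StrictMonoOn (u r) (Set.Ioi 0))
    (hdiff : ∀ r, DifferentiableOn ℝ (u r) (Set.Ioi 0))
    (hconc : ∀ r, StrictConcaveOn ℝ (Set.Ioi 0) (u r)) :
    (∀ C : Set (R → ℝ), (∀ Λ ∈ C, ∀ r, 0 < Λ r) →
      ∀ y : R → ℝ, (∀ r, 0 < y r) → ∀ a : ℝ, 0 < a → ∀ L L' : R → ℝ,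
        IsUniqueMax (netUtil u) y C L →
        IsUniqueMax (netUtil u) (fun r => a * y r) C L' → L' = L)
    ↔
    (∀ C : Set (R → ℝ), (∀ Λ ∈ C, ∀ r, 0 < Λ r) →
      ∀ y : R → ℝ, (∀ r, 0 < y r) → ∀ a : ℝ, 0 < a → ∀ L L' : R → ℝ,
        IsUniqueMax (netUtil u) y C L →
        IsUniqueMax (netUtil u) y ((fun Λ : R → ℝ => fun r => a * Λ r) '' C) L' →
        L' = fun r => a * L r) := by
  constructor
  · intro H1 C hC y hy a ha L L' hL hL'
    have ha' : a ≠ 0 := ne_of_gt ha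
    -- transfer hL' back by scaling with a⁻¹
    have h2 := isUniqueMax_scale u (inv_ne_zero ha') hL'
    rw [inv_scale_img ha'] at h2
    have := H1 C hC y hy a⁻¹ (inv_pos.2 ha) L (fun r => a⁻¹ * L' r) hL h2
    funext r
    have := congrFun this r
    field_simp at this
    linarith [this]
  · intro H2 C hC y hy a ha L L' hL hL'
    have ha' : a ≠ 0 := ne_of_gt ha
    have h2 := isUniqueMax_scale u (inv_ne_zero ha') hL'
    have hy' : (fun r => a⁻¹ * ((fun r => a * y r) r)) = y := by
      funext r; simp [inv_mul_cancel_left₀ ha']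
    rw [hy'] at h2
    have := H2 C hC y hy a⁻¹ (inv_pos.2 ha) L (fun r => a⁻¹ * L' r) hL h2
    funext r
    have := congrFun this r
    field_simp at this
    exact this
end
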